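/- Fix an integer k ≥ 3 and constants A⁻, A⁺, B, P > 0; set γ_k := 1/2 − 1/k and μ_k := k/2 − 1. There exist δ₁ > 0 and a time τ₈, depending only on k, A⁺, B, P, such that for every τ ≥ τ₈ the following holds. Let w : [2P/5, δ₁ e^{γ_k τ}] → (0,∞) be C¹; suppose w(σ₀) = B for some σ₀ ∈ (2P/5, 3P/5); suppose w(σ) > B for all σ ∈ (3P/5, δ₁ e^{γ_k τ}]; and suppose √(A⁻)/k ≤ (w^{1/k})′(σ) ≤ √(A⁺)/k at every σ ∈ [2P/5, δ₁ e^{γ_k τ}] at which B ≤ w(σ) ≤ (1/2) e^{μ_k τ}. Then B ≤ w(σ) ≤ (1/2) e^{μ_k τ}, and consequently √(A⁻)/k ≤ (w^{1/k})′(σ) ≤ √(A⁺)/k, for every σ ∈ [3P/5, δ₁ e^{γ_k τ}]. -/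

import Mathlib

open Topology Filter Asymptotics Set

/-- `γ_k = 1/2 - 1/k`. -/
noncomputable def gam (k : ℕ) : ℝ := 1/2 - 1/(k:ℝ)

/-- `μ_k = k/2 - 1`. -/
noncomputable def mu (k : ℕ) : ℝ := (k:ℝ)/2 - 1

set_option maxHeartbeats 1000000 in
/-- extension of the interface derivative estimate to the whole
range `3P/5 ≤ σ ≤ δ₁ e^{γ_k τ}`. Here `w` plays the role of `e^{μ_k τ}|v(·,τ)|`,
and `δ₁, τ₈` depend only on `k, A⁺, B, P` (in particular not on `A⁻`, `τ`, `w`). -/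
theorem stmt13 (k : ℕ) (hk : 3 ≤ k) (Ap B P : ℝ)
    (hAp : 0 < Ap) (hB : 0 < B) (hP : 0 < P) :
    ∃ δ₁ τ₈ : ℝ, 0 < δ₁ ∧
      ∀ Am : ℝ, 0 < Am →
      ∀ τ : ℝ, τ₈ ≤ τ →
      ∀ w : ℝ → ℝ,
        (∀ σ ∈ Set.Icc (2*P/5) (δ₁ * Real.exp (gam k * τ)), 0 < w σ) →
        ContDiffOn ℝ 1 w (Set.Icc (2*P/5) (δ₁ * Real.exp (gam k * τ))) →
        (∃ σ₀ ∈ Set.Ioo (2*P/5) (3*P/5), w σ₀ = B) →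
        (∀ σ ∈ Set.Ioc (3*P/5) (δ₁ * Real.exp (gam k * τ)), B < w σ) →
        (∀ σ ∈ Set.Icc (2*P/5) (δ₁ * Real.exp (gam k * τ)),
          B ≤ w σ → w σ ≤ (1/2) * Real.exp (mu k * τ) →
          Real.sqrt Am / (k:ℝ) ≤ deriv (fun s => w s ^ ((1:ℝ)/(k:ℝ))) σ ∧
          deriv (fun s => w s ^ ((1:ℝ)/(k:ℝ))) σ ≤ Real.sqrt Ap / (k:ℝ)) →
        ∀ σ ∈ Set.Icc (3*P/5) (δ₁ * Real.exp (gam k * τ)),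
          B ≤ w σ ∧ w σ ≤ (1/2) * Real.exp (mu k * τ) ∧
          Real.sqrt Am / (k:ℝ) ≤ deriv (fun s => w s ^ ((1:ℝ)/(k:ℝ))) σ ∧
          deriv (fun s => w s ^ ((1:ℝ)/(k:ℝ))) σ ≤ Real.sqrt Ap / (k:ℝ) := by
  have hk3 : (3:ℝ) ≤ (k:ℝ) := by exact_mod_cast hk
  have hk0 : (0:ℝ) < (k:ℝ) := by linarith
  have hkinv : (1:ℝ)/(k:ℝ) ≤ 1/3 := by
    rw [div_le_div_iff₀ hk0 (by norm_num)]; linarith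
  have hkinv0 : (0:ℝ) < 1/(k:ℝ) := by positivity
  have hγ6 : (1:ℝ)/6 ≤ gam k := by simp only [gam]; linarith
  have hγμ : gam k ≤ mu k := by simp only [gam, mu]; linarith
  have hsAp : 0 < Real.sqrt Ap := Real.sqrt_pos.mpr hAp
  set q : ℝ := ((1:ℝ)/2) ^ ((1:ℝ)/(k:ℝ)) with hqdef
  have hq0 : 0 < q := Real.rpow_pos_of_pos (by norm_num) _
  set δ₁ : ℝ := q * (k:ℝ) / (2 * Real.sqrt Ap) with hδdef
  have hδ₁ : 0 < δ₁ := by positivity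
  set Cm : ℝ := max (max (2 * B ^ ((1:ℝ)/(k:ℝ)) / q + 1) (P/δ₁ + 1)) (2*B+1) with hCmdef
  have hCm1 : (1:ℝ) ≤ Cm := le_trans (by linarith : (1:ℝ) ≤ 2*B+1) (le_max_right _ _)
  have hCm0 : 0 < Cm := by linarith
  refine ⟨δ₁, 6 * Real.log Cm, hδ₁, ?_⟩
  intro Am hAm τ hτ w hpos hw hex h4 h5
  have hτ80 : 0 ≤ 6 * Real.log Cm := by
    have := Real.log_nonneg hCm1; linarith
  have hτ0 : 0 ≤ τ := le_trans hτ80 hτ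
  have hexpC : Cm ≤ Real.exp (gam k * τ) := by
    have h1 : Real.log Cm ≤ gam k * τ := by
      have h2 : (1/6:ℝ) * τ ≤ gam k * τ := mul_le_mul_of_nonneg_right hγ6 hτ0
      nlinarith
    calc Cm = Real.exp (Real.log Cm) := (Real.exp_log hCm0).symm
      _ ≤ _ := Real.exp_le_exp.mpr h1
  set E : ℝ := δ₁ * Real.exp (gam k * τ) with hEdef
  set M : ℝ := (1/2) * Real.exp (mu k * τ) with hMdef
  have hEP : P < E := by
    have h1 : P/δ₁ + 1 ≤ Cm := le_trans (le_max_right _ _) (le_max_left _ _)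
    have h2 : δ₁ * (P/δ₁ + 1) ≤ E := by
      apply mul_le_mul_of_nonneg_left (le_trans h1 hexpC) hδ₁.le
    have h3 : δ₁ * (P/δ₁ + 1) = P + δ₁ := by field_simp
    linarith
  have hBM : B < M := by
    have h1 : 2*B+1 ≤ Real.exp (gam k * τ) := le_trans (le_max_right _ _) hexpC
    have h2 : Real.exp (gam k * τ) ≤ Real.exp (mu k * τ) :=
      Real.exp_le_exp.mpr (mul_le_mul_of_nonneg_right hγμ hτ0)
    rw [hMdef]; linarith
  have hBq : B ^ ((1:ℝ)/(k:ℝ)) < q * Real.exp (gam k * τ) / 2 := by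
    have h1 : 2 * B ^ ((1:ℝ)/(k:ℝ)) / q + 1 ≤ Real.exp (gam k * τ) :=
      le_trans (le_trans (le_max_left _ _) (le_max_left _ _)) hexpC
    have h2 : q * (2 * B ^ ((1:ℝ)/(k:ℝ)) / q + 1) ≤ q * Real.exp (gam k * τ) :=
      mul_le_mul_of_nonneg_left h1 hq0.le
    have h3 : q * (2 * B ^ ((1:ℝ)/(k:ℝ)) / q + 1) = 2 * B ^ ((1:ℝ)/(k:ℝ)) + q := by
      field_simp
    nlinarith
  obtain ⟨σ₀, hσ₀mem, hσ₀⟩ := hex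
  have h35 : 3*P/5 < E := by linarith
  have h25 : 2*P/5 ≤ 3*P/5 := by linarith
  have hIsub : Set.Icc (3*P/5) E ⊆ Set.Icc (2*P/5) E :=
    Set.Icc_subset_Icc_left h25
  have hcont : ContinuousOn w (Set.Icc (2*P/5) E) := hw.continuousOn
  -- lower bound
  have hlow : ∀ σ ∈ Set.Icc (3*P/5) E, B ≤ w σ := by
    intro σ hσ
    rcases eq_or_lt_of_le hσ.1 with h | h
    · -- σ = 3P/5
      have hmem : (3*P/5) ∈ Set.Icc (2*P/5) E := ⟨h25, h35.le⟩
      have hcw : ContinuousWithinAt w (Set.Ioc (3*P/5) E) (3*P/5) :=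
        (hcont _ hmem).mono (Set.Ioc_subset_Icc_self.trans hIsub)
      have hne : (𝓝[Set.Ioc (3*P/5) E] (3*P/5)).NeBot := by
        rw [nhdsWithin_Ioc_eq_nhdsGT h35]
        infer_instance
      have hev : ∀ᶠ x in 𝓝[Set.Ioc (3*P/5) E] (3*P/5), B ≤ w x :=
        eventually_of_mem self_mem_nhdsWithin (fun x hx => (h4 x hx).le)
      have := ge_of_tendsto hcw hev
      rwa [← h]
    · exact (h4 σ ⟨h, hσ.2⟩).le
  -- upper bound
  have hup : ∀ σ ∈ Set.Icc (3*P/5) E, w σ ≤ M := by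
    by_contra hcon
    push_neg at hcon
    obtain ⟨σ₁, hσ₁, hMlt⟩ := hcon
    have hσ₀σ₁ : σ₀ < σ₁ := lt_of_lt_of_le hσ₀mem.2 hσ₁.1
    have hIcc1 : Set.Icc σ₀ σ₁ ⊆ Set.Icc (2*P/5) E :=
      Set.Icc_subset_Icc hσ₀mem.1.le hσ₁.2
    set S : Set ℝ := {x ∈ Set.Icc σ₀ σ₁ | M ≤ w x} with hSdef
    have hScl : IsClosed S :=
      ContinuousOn.preimage_isClosed_of_isClosed (hcont.mono hIcc1)
        isClosed_Icc isClosed_Ici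
    have hSne : S.Nonempty := ⟨σ₁, ⟨hσ₀σ₁.le, le_refl _⟩, hMlt.le⟩
    have hSbd : BddBelow S := (bddBelow_Icc : BddBelow (Set.Icc σ₀ σ₁)).mono
      (fun x hx => hx.1)
    set c : ℝ := sInf S with hcdef
    have hcS : c ∈ S := hScl.csInf_mem hSne hSbd
    have hcle : ∀ x ∈ S, c ≤ x := fun x hx => csInf_le hSbd hx
    have hσ₀c : σ₀ < c := by
      rcases eq_or_lt_of_le hcS.1.1 with h | h
      · exfalso; have := hcS.2; rw [← h, hσ₀] at this; linarith
      · exact h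
    have hwc : w c = M := by
      have hIVT := intermediate_value_Icc hcS.1.1
        ((hcont.mono hIcc1).mono (Set.Icc_subset_Icc_right hcS.1.2))
      have hMmem : M ∈ Set.Icc (w σ₀) (w c) := ⟨by rw [hσ₀]; exact hBM.le, hcS.2⟩
      obtain ⟨x, hx, hwx⟩ := hIVT hMmem
      have hxS : x ∈ S := ⟨⟨hx.1, hx.2.trans hcS.1.2⟩, hwx.ge⟩
      have := hcle x hxS
      have hxc : x = c := le_antisymm hx.2 this
      rw [← hxc]; exact hwx
    have hltM : ∀ x ∈ Set.Ico σ₀ c, w x < M := by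
      intro x hx
      by_contra h
      push_neg at h
      exact absurd (hcle x ⟨⟨hx.1, hx.2.le.trans hcS.1.2⟩, h⟩) (not_le.mpr hx.2)
    set T : Set ℝ := {x ∈ Set.Icc σ₀ c | w x ≤ B} with hTdef
    have hIcc2 : Set.Icc σ₀ c ⊆ Set.Icc (2*P/5) E :=
      Set.Icc_subset_Icc hσ₀mem.1.le (hcS.1.2.trans hσ₁.2)
    have hTcl : IsClosed T :=
      ContinuousOn.preimage_isClosed_of_isClosed (hcont.mono hIcc2)
        isClosed_Icc isClosed_Iic
    have hTne : T.Nonempty := ⟨σ₀, ⟨le_refl _, hσ₀c.le⟩, hσ₀.le⟩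
    have hTbd : BddAbove T := (bddAbove_Icc (a := σ₀) (b := c)).mono
      (fun x hx => hx.1)
    set d : ℝ := sSup T with hddef
    have hdT : d ∈ T := hTcl.csSup_mem hTne hTbd
    have hdle : ∀ x ∈ T, x ≤ d := fun x hx => le_csSup hTbd hx
    have hdc : d < c := by
      rcases eq_or_lt_of_le hdT.1.2 with h | h
      · exfalso; have := hdT.2; rw [h, hwc] at this; linarith
      · exact h
    have hgtB : ∀ x ∈ Set.Ioc d c, B < w x := by
      intro x hx
      by_contra h
      push_neg at h
      exact absurd (hdle x ⟨⟨hdT.1.1.trans hx.1.le, hx.2⟩, h⟩) (not_le.mpr hx.1)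
    have hwd : w d = B := by
      have hIVT := intermediate_value_Icc hdc.le
        ((hcont.mono hIcc2).mono (Set.Icc_subset_Icc_left hdT.1.1))
      have hBmem : B ∈ Set.Icc (w d) (w c) := ⟨hdT.2, by rw [hwc]; exact hBM.le⟩
      obtain ⟨x, hx, hwx⟩ := hIVT hBmem
      have hxT : x ∈ T := ⟨⟨hdT.1.1.trans hx.1, hx.2⟩, hwx.le⟩
      have hxd : x = d := le_antisymm (hdle x hxT) hx.1
      rw [← hxd]; exact hwx
    -- bounds on [d, c]
    have hBw : ∀ x ∈ Set.Icc d c, B ≤ w x := by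
      intro x hx
      rcases eq_or_lt_of_le hx.1 with h | h
      · rw [← h, hwd]
      · exact (hgtB x ⟨h, hx.2⟩).le
    have hwM : ∀ x ∈ Set.Icc d c, w x ≤ M := by
      intro x hx
      rcases eq_or_lt_of_le hx.2 with h | h
      · rw [h, hwc]
      · exact (hltM x ⟨hdT.1.1.trans hx.1, h⟩).le
    have hsub : Set.Icc d c ⊆ Set.Icc (2*P/5) E :=
      (Set.Icc_subset_Icc hdT.1.1 (le_refl c)).trans hIcc2
    set g : ℝ → ℝ := fun s => w s ^ ((1:ℝ)/(k:ℝ)) with hgdef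
    have hCnn : 0 ≤ Real.sqrt Ap / (k:ℝ) := by positivity
    have hder : ∀ x ∈ Set.Ico d c, HasDerivAt g (deriv g x) x ∧
        ‖deriv g x‖ ≤ Real.sqrt Ap / (k:ℝ) := by
      intro x hx
      have hxI : x ∈ Set.Icc (2*P/5) E := hsub ⟨hx.1, hx.2.le⟩
      have hx1 : 2*P/5 < x := by
        have ha : 2*P/5 < σ₀ := hσ₀mem.1
        have hb' : σ₀ ≤ d := hdT.1.1
        have hc' : d ≤ x := hx.1
        linarith
      have hx2 : x < E := lt_of_lt_of_le hx.2 (hcS.1.2.trans hσ₁.2)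
      have hnhds : Set.Icc (2*P/5) E ∈ 𝓝 x := Icc_mem_nhds hx1 hx2
      have hdw : DifferentiableAt ℝ w x :=
        (hw.contDiffAt hnhds).differentiableAt one_ne_zero
      have hwx0 : w x ≠ 0 := (hpos x hxI).ne'
      have hdg : DifferentiableAt ℝ g x := hdw.rpow_const (Or.inl hwx0)
      have hb := h5 x hxI (hBw x ⟨hx.1, hx.2.le⟩) (hwM x ⟨hx.1, hx.2.le⟩)
      refine ⟨hdg.hasDerivAt, ?_⟩
      rw [Real.norm_eq_abs, abs_le]
      constructor
      · have : (0:ℝ) ≤ Real.sqrt Am / (k:ℝ) := by positivity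
        linarith [hb.1]
      · exact hb.2
    have hcontg : ContinuousOn g (Set.Icc d c) :=
      (hcont.mono hsub).rpow_const (fun x _ => Or.inr hkinv0.le)
    have hstep : ∀ x ∈ Set.Ico d c,
        g x - g d ≤ Real.sqrt Ap / (k:ℝ) * (x - d) := by
      intro x hx
      have hmvt := norm_image_sub_le_of_norm_deriv_le_segment'
        (f := g) (f' := fun y => deriv g y) (a := d) (b := x)
        (fun y hy => ((hder y ⟨hy.1, lt_of_le_of_lt hy.2 hx.2⟩).1).hasDerivWithinAt)
        (fun y hy => (hder y ⟨hy.1, hy.2.trans hx.2⟩).2)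
        x ⟨hx.1, le_refl x⟩
      rw [Real.norm_eq_abs] at hmvt
      exact le_trans (le_abs_self _) hmvt
    have hgc : g c - g d ≤ Real.sqrt Ap / (k:ℝ) * (c - d) := by
      have htend : Tendsto g (𝓝[Set.Ico d c] c) (𝓝 (g c)) :=
        (hcontg c ⟨hdc.le, le_refl c⟩).mono Set.Ico_subset_Icc_self
      have hne : (𝓝[Set.Ico d c] c).NeBot := by
        rw [nhdsWithin_Ico_eq_nhdsLT hdc]
        infer_instance
      have hev : ∀ᶠ x in 𝓝[Set.Ico d c] c,
          g x ≤ g d + Real.sqrt Ap / (k:ℝ) * (c - d) := by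
        apply eventually_of_mem self_mem_nhdsWithin
        intro x hx
        have h1 := hstep x hx
        have h2 : Real.sqrt Ap / (k:ℝ) * (x - d) ≤
            Real.sqrt Ap / (k:ℝ) * (c - d) :=
          mul_le_mul_of_nonneg_left (by linarith [hx.2.le]) hCnn
        linarith
      have := le_of_tendsto htend hev
      linarith
    have hgd : g d = B ^ ((1:ℝ)/(k:ℝ)) := by simp only [hgdef, hwd]
    have hgcval : g c = q * Real.exp (gam k * τ) := by
      have : g c = ((1/2) * Real.exp (mu k * τ)) ^ ((1:ℝ)/(k:ℝ)) := by
        simp only [hgdef, hwc, hMdef]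
      rw [this, Real.mul_rpow (by norm_num) (Real.exp_pos _).le, ← Real.exp_mul]
      have harg : mu k * τ * (1/(k:ℝ)) = gam k * τ := by
        simp only [mu, gam]; field_simp
      rw [harg]
    have hcd : c - d ≤ δ₁ * Real.exp (gam k * τ) := by
      have h1 : c ≤ E := hcS.1.2.trans hσ₁.2
      have h2 : 0 < d := by
        have ha : 2*P/5 < σ₀ := hσ₀mem.1
        have hb' : σ₀ ≤ d := hdT.1.1
        nlinarith
      rw [hEdef] at h1; linarith
    have hkey : Real.sqrt Ap / (k:ℝ) * (δ₁ * Real.exp (gam k * τ)) =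
        q * Real.exp (gam k * τ) / 2 := by
      rw [hδdef]; field_simp
    have h1 : q * Real.exp (gam k * τ) - B ^ ((1:ℝ)/(k:ℝ)) ≤
        q * Real.exp (gam k * τ) / 2 := by
      have h2 : Real.sqrt Ap / (k:ℝ) * (c - d) ≤
          Real.sqrt Ap / (k:ℝ) * (δ₁ * Real.exp (gam k * τ)) :=
        mul_le_mul_of_nonneg_left hcd hCnn
      rw [hkey] at h2
      rw [hgcval, hgd] at hgc
      linarith
    linarith
  intro σ hσ
  exact ⟨hlow σ hσ, hup σ hσ, h5 σ (hIsub hσ) (hlow σ hσ) (hup σ hσ)⟩
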